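/- Let ‖·‖ be a norm on ℝ². The collection of maximal nondegenerate line segments contained in the unit sphere {z ∈ ℝ² : ‖z‖ = 1} is at most countable. -/

import Mathlib

abbrev F2 := EuclideanSpace ℝ (Fin 2)

lemma seg_param_fwd {u d : F2} {m M : ℝ} (hmM : m < M) {t : ℝ} (ht : t ∈ Set.Icc m M) :
    u + t • d ∈ segment ℝ (u + m • d) (u + M • d) := by
  rw [segment_eq_image']
  obtain ⟨h1, h2⟩ := ht
  refine ⟨(t - m) / (M - m), ⟨div_nonneg (by linarith) (by linarith), by
    rw [div_le_one (by linarith)]; linarith⟩, ?_⟩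
  have h3 : (u + M • d) - (u + m • d) = (M - m) • d := by rw [sub_smul]; abel
  show u + m • d + ((t - m) / (M - m)) • ((u + M • d) - (u + m • d)) = u + t • d
  rw [h3, smul_smul, div_mul_cancel₀ _ (by linarith : M - m ≠ 0), sub_smul]
  abel

lemma seg_param_bwd {u d : F2} {m M : ℝ} (hmM : m ≤ M) {x : F2}
    (hx : x ∈ segment ℝ (u + m • d) (u + M • d)) :
    ∃ t ∈ Set.Icc m M, x = u + t • d := by
  rw [segment_eq_image'] at hx
  obtain ⟨θ, ⟨hθ0, hθ1⟩, rfl⟩ := hx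
  refine ⟨m + θ * (M - m), ⟨by nlinarith, by nlinarith⟩, ?_⟩
  have h3 : (u + M • d) - (u + m • d) = (M - m) • d := by rw [sub_smul]; abel
  show u + m • d + θ • ((u + M • d) - (u + m • d)) = u + (m + θ * (M - m)) • d
  rw [h3, smul_smul, add_smul]
  abel

lemma conv2 (N : F2 → ℝ)
    (hNsmul : ∀ (a : ℝ) (z : F2), N (a • z) = |a| * N z)
    (hNadd : ∀ z w, N (z + w) ≤ N z + N w) {x y : F2} {a b : ℝ}
    (hx : N x ≤ 1) (hy : N y ≤ 1) (ha : 0 ≤ a) (hb : 0 ≤ b) (hab : a + b = 1) :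
    N (a • x + b • y) ≤ 1 := by
  have := hNadd (a • x) (b • y)
  rw [hNsmul a x, hNsmul b y, abs_of_nonneg ha, abs_of_nonneg hb] at this
  nlinarith [this]

lemma small_delta (p q : ℝ) : ∃ δ : ℝ, 0 < δ ∧ |δ * p| ≤ 1/2 ∧ |δ * q| ≤ 1/2 := by
  have hK : (0:ℝ) < |p| + |q| + 1 := by positivity
  refine ⟨1 / (2 * (|p| + |q| + 1)), by positivity, ?_, ?_⟩
  · rw [abs_mul, abs_of_pos (by positivity : (0:ℝ) < 1 / (2 * (|p| + |q| + 1)))]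
    rw [div_mul_eq_mul_div, one_mul, div_le_iff₀ (by positivity)]
    nlinarith [abs_nonneg p, abs_nonneg q]
  · rw [abs_mul, abs_of_pos (by positivity : (0:ℝ) < 1 / (2 * (|p| + |q| + 1)))]
    rw [div_mul_eq_mul_div, one_mul, div_le_iff₀ (by positivity)]
    nlinarith [abs_nonneg p, abs_nonneg q]

lemma main_cross (N : F2 → ℝ) (hN0 : ∀ z, N z = 0 ↔ z = 0)
    (hNsmul : ∀ (a : ℝ) (z : F2), N (a • z) = |a| * N z)
    (hNadd : ∀ z w, N (z + w) ≤ N z + N w)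
    {u v u' v' z : F2} (huv : u ≠ v) (hu'v' : u' ≠ v')
    (hS : segment ℝ u v ⊆ {z | N z = 1}) (hS' : segment ℝ u' v' ⊆ {z | N z = 1})
    (hmax : ∀ p q, segment ℝ p q ⊆ {z | N z = 1} → segment ℝ u v ⊆ segment ℝ p q →
      segment ℝ u v = segment ℝ p q)
    (hmax' : ∀ p q, segment ℝ p q ⊆ {z | N z = 1} → segment ℝ u' v' ⊆ segment ℝ p q →
      segment ℝ u' v' = segment ℝ p q)
    (hz : z ∈ openSegment ℝ u v) (hz' : z ∈ openSegment ℝ u' v') :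
    segment ℝ u v = segment ℝ u' v' := by
  have hNz : N z = 1 := hS (openSegment_subset_segment ℝ u v hz)
  rw [openSegment_eq_image'] at hz hz'
  obtain ⟨α, ⟨hα0, hα1⟩, hzα⟩ := hz
  obtain ⟨α', ⟨hα'0, hα'1⟩, hzα'⟩ := hz'
  simp only at hzα hzα'
  set d : F2 := v - u with hd
  set d' : F2 := v' - u' with hd'
  have hd0 : d ≠ 0 := sub_ne_zero.mpr (Ne.symm huv)
  have hd'0 : d' ≠ 0 := sub_ne_zero.mpr (Ne.symm hu'v')
  by_cases hind : LinearIndependent ℝ ![d, d']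
  · -- crossing, non-collinear: contradiction
    exfalso
    set ε : ℝ := min α (1 - α) with hε
    set ε' : ℝ := min α' (1 - α') with hε'
    have hεpos : 0 < ε := lt_min hα0 (by linarith)
    have hε'pos : 0 < ε' := lt_min hα'0 (by linarith)
    set e : F2 := ε • d with he
    set e' : F2 := ε' • d' with he'
    have hmem : ∀ σ : ℝ, σ ∈ Set.Icc (0:ℝ) 1 → N (u + σ • d) = 1 := by
      intro σ hσ
      exact hS (by rw [segment_eq_image']; exact ⟨σ, hσ, rfl⟩)
    have hmem' : ∀ σ : ℝ, σ ∈ Set.Icc (0:ℝ) 1 → N (u' + σ • d') = 1 := by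
      intro σ hσ
      exact hS' (by rw [segment_eq_image']; exact ⟨σ, hσ, rfl⟩)
    have hzp : N (z + e) = 1 := by
      have h1 : z + e = u + (α + ε) • d := by rw [← hzα, he, add_smul]; abel
      rw [h1]
      exact hmem _ ⟨by linarith, by have := min_le_right α (1-α); linarith⟩
    have hzm : N (z - e) = 1 := by
      have h1 : z - e = u + (α - ε) • d := by rw [← hzα, he, sub_smul]; abel
      rw [h1]
      exact hmem _ ⟨by have := min_le_left α (1-α); linarith, by linarith⟩
    have hzp' : N (z + e') = 1 := by
      have h1 : z + e' = u' + (α' + ε') • d' := by rw [← hzα', he', add_smul]; abel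
      rw [h1]
      exact hmem' _ ⟨by linarith, by have := min_le_right α' (1-α'); linarith⟩
    have hzm' : N (z - e') = 1 := by
      have h1 : z - e' = u' + (α' - ε') • d' := by rw [← hzα', he', sub_smul]; abel
      rw [h1]
      exact hmem' _ ⟨by have := min_le_left α' (1-α'); linarith, by linarith⟩
    have hline : ∀ σ : ℝ, |σ| ≤ 1 → N (z + σ • e) ≤ 1 := by
      intro σ hσ
      rw [abs_le] at hσ
      have key : z + σ • e = ((1+σ)/2) • (z + e) + ((1-σ)/2) • (z - e) := by module
      rw [key]
      exact conv2 N hNsmul hNadd hzp.le hzm.le (by linarith) (by linarith) (by ring)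
    have hline' : ∀ σ : ℝ, |σ| ≤ 1 → N (z + σ • e') ≤ 1 := by
      intro σ hσ
      rw [abs_le] at hσ
      have key : z + σ • e' = ((1+σ)/2) • (z + e') + ((1-σ)/2) • (z - e') := by module
      rw [key]
      exact conv2 N hNsmul hNadd hzp'.le hzm'.le (by linarith) (by linarith) (by ring)
    have hsq : ∀ s t : ℝ, |s| ≤ 1/2 → |t| ≤ 1/2 → N (z + s • e + t • e') ≤ 1 := by
      intro s t hs ht
      have key : z + s • e + t • e' = (1/2 : ℝ) • (z + (2*s) • e) + (1/2 : ℝ) • (z + (2*t) • e') := by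
        module
      rw [key]
      refine conv2 N hNsmul hNadd (hline (2*s) ?_) (hline' (2*t) ?_) (by norm_num) (by norm_num) (by norm_num)
      · rw [abs_mul, abs_two]; linarith
      · rw [abs_mul, abs_two]; linarith
    -- e, e' linearly independent
    have hee' : LinearIndependent ℝ ![e, e'] := by
      rw [LinearIndependent.pair_iff] at hind ⊢
      intro s t hst
      rw [he, he', smul_smul, smul_smul] at hst
      obtain ⟨h1, h2⟩ := hind _ _ hst
      exact ⟨by
        rcases mul_eq_zero.mp h1 with h | h
        · exact h
        · exact absurd h hεpos.ne', by
        rcases mul_eq_zero.mp h2 with h | h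
        · exact h
        · exact absurd h hε'pos.ne'⟩
    have hcard : Fintype.card (Fin 2) = Module.finrank ℝ F2 := by
      simp [finrank_euclideanSpace_fin]
    let B : Module.Basis (Fin 2) ℝ F2 := basisOfLinearIndependentOfCardEqFinrank hee' hcard
    have hB : ⇑B = ![e, e'] := coe_basisOfLinearIndependentOfCardEqFinrank hee' hcard
    obtain ⟨p, q, hzrepr⟩ : ∃ p q : ℝ, z = p • e + q • e' := by
      refine ⟨B.repr z 0, B.repr z 1, ?_⟩
      have h1 := B.sum_repr z
      rw [Fin.sum_univ_two, hB] at h1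
      simpa using h1.symm
    obtain ⟨δ, hδpos, hbp, hbq⟩ := small_delta p q
    have hle := hsq (δ * p) (δ * q) hbp hbq
    have heq : z + (δ * p) • e + (δ * q) • e' = (1 + δ) • z := by
      rw [hzrepr]; module
    rw [heq, hNsmul, hNz, mul_one, abs_of_pos (by linarith)] at hle
    linarith
  · -- collinear case
    rw [LinearIndependent.pair_iff] at hind
    push_neg at hind
    obtain ⟨s, t, hst, hne⟩ := hind
    have hc : ∃ c : ℝ, c ≠ 0 ∧ d' = c • d := by
      by_cases ht : t = 0
      · exfalso
        subst ht
        rw [zero_smul, add_zero] at hst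
        rcases smul_eq_zero.mp hst with h | h
        · exact (hne h) rfl
        · exact hd0 h
      · refine ⟨-(s/t), ?_, ?_⟩
        · intro h0
          have hs0 : s = 0 := by
            field_simp at h0
            simpa using h0
          rw [hs0, zero_smul, zero_add] at hst
          rcases smul_eq_zero.mp hst with h | h
          · exact ht h
          · exact hd'0 h
        · have h1 : t • d' = -(s • d) := by
            rw [eq_neg_iff_add_eq_zero, add_comm]; exact hst
          have h2 := congrArg (fun w => t⁻¹ • w) h1
          simp only [inv_smul_smul₀ ht] at h2
          rw [h2, smul_neg, smul_smul, ← neg_smul]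
          ring_nf
    obtain ⟨c, hc0, hceq⟩ := hc
    -- express everything on the line u + t • d
    obtain ⟨β, hβ⟩ : ∃ β : ℝ, β = α - α' * c := ⟨_, rfl⟩
    have hu'eq : u' = u + β • d := by
      have h1 : u + α • d = u' + (α' * c) • d := by
        rw [hzα, ← hzα', hceq, smul_smul]
      have h2 : u' = (u + α • d) - (α' * c) • d := by
        rw [h1]; abel
      rw [h2, hβ, sub_smul]; abel
    have hv'eq : v' = u + (β + c) • d := by
      have h1 : v' = u' + d' := by rw [hd']; abel
      rw [h1, hu'eq, hceq, add_smul]; abel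
    obtain ⟨β', hβ'⟩ : ∃ x : ℝ, x = min β (β + c) := ⟨_, rfl⟩
    obtain ⟨γ', hγ'⟩ : ∃ x : ℝ, x = max β (β + c) := ⟨_, rfl⟩
    have hβ'β : β' ≤ β := hβ' ▸ min_le_left _ _
    have hβ'c : β' ≤ β + c := hβ' ▸ min_le_right _ _
    have hβγ : β ≤ γ' := hγ' ▸ le_max_left _ _
    have hβcγ : β + c ≤ γ' := hγ' ▸ le_max_right _ _
    -- α = β + α' * c and is strictly between β' and γ'
    have hαeq : α = β + α' * c := by rw [hβ]; ring
    have hαlo : β' < α := by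
      rcases lt_or_gt_of_ne hc0 with h | h
      · have h2 : (1 - α') * c < 0 := mul_neg_of_pos_of_neg (by linarith) h
        have : β + c < β + α' * c := by linarith [h2]
        have hβ'eq : β' = β + c := by rw [hβ']; exact min_eq_right (by linarith)
        rw [hβ'eq]; linarith [hαeq]
      · have h2 : 0 < α' * c := mul_pos hα'0 h
        have : β < β + α' * c := by linarith
        have hβ'eq : β' = β := by rw [hβ']; exact min_eq_left (by linarith)
        rw [hβ'eq]; linarith [hαeq]
    have hαhi : α < γ' := by
      rcases lt_or_gt_of_ne hc0 with h | h
      · have h2 : α' * c < 0 := mul_neg_of_pos_of_neg hα'0 h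
        have : β + α' * c < β := by linarith
        have hγ'eq : γ' = β := by rw [hγ']; exact max_eq_left (by linarith)
        rw [hγ'eq]; linarith [hαeq]
      · have h2 : 0 < (1 - α') * c := mul_pos (by linarith) h
        have : β + α' * c < β + c := by linarith [h2]
        have hγ'eq : γ' = β + c := by rw [hγ']; exact max_eq_right (by linarith)
        rw [hγ'eq]; linarith [hαeq]
    obtain ⟨m, hm⟩ : ∃ x : ℝ, x = min 0 β' := ⟨_, rfl⟩
    obtain ⟨M, hM⟩ : ∃ x : ℝ, x = max 1 γ' := ⟨_, rfl⟩
    have hm0 : m ≤ 0 := hm ▸ min_le_left _ _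
    have hM1 : 1 ≤ M := hM ▸ le_max_left _ _
    have hmβ' : m ≤ β' := hm ▸ min_le_right _ _
    have hγ'M : γ' ≤ M := hM ▸ le_max_right _ _
    have hmM : m < M := by linarith

    have claim1 : segment ℝ (u + m • d) (u + M • d) ⊆ {z | N z = 1} := by
      intro x hx
      obtain ⟨τ, ⟨hτ1, hτ2⟩, rfl⟩ := seg_param_bwd hmM.le hx
      have hcase : (0 ≤ τ ∧ τ ≤ 1) ∨ (β' ≤ τ ∧ τ ≤ γ') := by
        rcases le_or_gt 0 τ with h0 | h0 <;> rcases le_or_gt τ 1 with h1 | h1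
        · exact Or.inl ⟨h0, h1⟩
        · refine Or.inr ⟨by linarith, ?_⟩
          rcases le_max_iff.mp (hM ▸ hτ2) with h | h
          · linarith
          · exact h
        · refine Or.inr ⟨?_, by linarith⟩
          rcases min_le_iff.mp (hm ▸ hτ1) with h | h
          · linarith
          · exact h
        · linarith
      rcases hcase with ⟨h0, h1⟩ | ⟨h0, h1⟩
      · exact hS (by rw [segment_eq_image']; exact ⟨τ, ⟨h0, h1⟩, rfl⟩)
      · apply hS'
        rcases lt_or_gt_of_ne hc0 with h | h
        · -- c < 0 : β' = β + c, γ' = β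
          have hβ'eq : β' = β + c := by rw [hβ']; exact min_eq_right (by linarith)
          have hγ'eq : γ' = β := by rw [hγ']; exact max_eq_left (by linarith)
          rw [hu'eq, hv'eq, segment_symm]
          exact seg_param_fwd (by linarith : β + c < β) ⟨by linarith [hβ'eq ▸ h0], by linarith [hγ'eq ▸ h1]⟩
        · -- c > 0 : β' = β, γ' = β + c
          have hβ'eq : β' = β := by rw [hβ']; exact min_eq_left (by linarith)
          have hγ'eq : γ' = β + c := by rw [hγ']; exact max_eq_right (by linarith)
          rw [hu'eq, hv'eq]
          exact seg_param_fwd (by linarith : β < β + c) ⟨by linarith [hβ'eq ▸ h0], by linarith [hγ'eq ▸ h1]⟩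
    have hmemPQ : ∀ τ : ℝ, m ≤ τ → τ ≤ M → u + τ • d ∈ segment ℝ (u + m • d) (u + M • d) := by
      intro τ h1 h2
      exact seg_param_fwd hmM ⟨h1, h2⟩
    have claim2 : segment ℝ u v ⊆ segment ℝ (u + m • d) (u + M • d) := by
      apply (convex_segment (u + m • d) (u + M • d)).segment_subset
      · have := hmemPQ 0 hm0 (by linarith)
        simpa using this
      · have := hmemPQ 1 (by linarith) hM1
        have h1 : u + (1:ℝ) • d = v := by rw [one_smul, hd]; abel
        rwa [h1] at this
    have claim2' : segment ℝ u' v' ⊆ segment ℝ (u + m • d) (u + M • d) := by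
      apply (convex_segment (u + m • d) (u + M • d)).segment_subset
      · rw [hu'eq]
        exact hmemPQ β (by linarith) (by linarith)
      · rw [hv'eq]
        exact hmemPQ (β + c) (by linarith) (by linarith)
    rw [hmax _ _ claim1 claim2, hmax' _ _ claim1 claim2']

lemma indep_of_seg' (N : F2 → ℝ) (hN0 : ∀ z, N z = 0 ↔ z = 0)
    (hNsmul : ∀ (a : ℝ) (z : F2), N (a • z) = |a| * N z)
    {u v : F2} (huv : u ≠ v)
    (hS : segment ℝ u v ⊆ {z | N z = 1}) : LinearIndependent ℝ ![u, v] := by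
  have hu : N u = 1 := hS (left_mem_segment ℝ u v)
  have hv : N v = 1 := hS (right_mem_segment ℝ u v)
  have hmid : N ((1/2 : ℝ) • u + (1/2 : ℝ) • v) = 1 :=
    hS ⟨1/2, 1/2, by norm_num, by norm_num, by norm_num, rfl⟩
  rw [LinearIndependent.pair_iff]
  intro s t hst
  have hu0 : u ≠ 0 := fun h => by simp [h, (hN0 0).mpr rfl] at hu
  by_cases ht : t = 0
  · subst ht
    rw [zero_smul, add_zero] at hst
    rcases smul_eq_zero.mp hst with h | h
    · exact ⟨h, rfl⟩
    · exact absurd h hu0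
  · exfalso
    have hveq : v = (-(s/t)) • u := by
      have h1 : t • v = -(s • u) := by
        rw [eq_neg_iff_add_eq_zero, add_comm]; exact hst
      have h2 := congrArg (fun w => t⁻¹ • w) h1
      simp only [inv_smul_smul₀ ht] at h2
      rw [h2, smul_neg, smul_smul, ← neg_smul]
      ring_nf
    have habs : |(-(s/t))| = 1 := by
      have h3 := hNsmul (-(s/t)) u
      rw [← hveq, hv, hu, mul_one] at h3
      exact h3.symm
    rcases (abs_eq (by norm_num : (0:ℝ) ≤ 1)).mp habs with h | h
    · rw [h, one_smul] at hveq
      exact huv hveq.symm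
    · rw [h, neg_one_smul] at hveq
      have h4 : (1/2 : ℝ) • u + (1/2 : ℝ) • v = 0 := by rw [hveq]; module
      rw [h4, (hN0 0).mpr rfl] at hmid
      norm_num at hmid

lemma cone_pt (N : F2 → ℝ)
    (hNsmul : ∀ (a : ℝ) (z : F2), N (a • z) = |a| * N z)
    {u v : F2} (hS : segment ℝ u v ⊆ {z | N z = 1}) {a b : ℝ} (ha : 0 < a) (hb : 0 < b) :
    N (a • u + b • v) = a + b ∧ (a + b)⁻¹ • (a • u + b • v) ∈ openSegment ℝ u v := by
  have hab : 0 < a + b := by linarith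
  have hw : (a/(a+b)) • u + (b/(a+b)) • v ∈ segment ℝ u v :=
    ⟨a/(a+b), b/(a+b), by positivity, by positivity, by field_simp, rfl⟩
  have hw1 : N ((a/(a+b)) • u + (b/(a+b)) • v) = 1 := hS hw
  have key : a • u + b • v = (a+b) • ((a/(a+b)) • u + (b/(a+b)) • v) := by
    rw [smul_add, smul_smul, smul_smul, mul_div_cancel₀ _ hab.ne', mul_div_cancel₀ _ hab.ne']
  constructor
  · rw [key, hNsmul, hw1, abs_of_pos hab, mul_one]
  · rw [key, inv_smul_smul₀ hab.ne']
    exact ⟨a/(a+b), b/(a+b), by positivity, by positivity, by field_simp, rfl⟩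

theorem stmt6 (N : EuclideanSpace ℝ (Fin 2) → ℝ)
    (hN0 : ∀ z, N z = 0 ↔ z = 0)
    (hNsmul : ∀ (a : ℝ) (z : EuclideanSpace ℝ (Fin 2)), N (a • z) = |a| * N z)
    (hNadd : ∀ z w, N (z + w) ≤ N z + N w) :
    Set.Countable {S : Set (EuclideanSpace ℝ (Fin 2)) |
        (∃ u v, u ≠ v ∧ S = segment ℝ u v) ∧
        S ⊆ {z | N z = 1} ∧
        (∀ u' v', segment ℝ u' v' ⊆ {z | N z = 1} → S ⊆ segment ℝ u' v' →
          S = segment ℝ u' v')} := by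
  set 𝒮 := {S : Set F2 |
        (∃ u v, u ≠ v ∧ S = segment ℝ u v) ∧
        S ⊆ {z | N z = 1} ∧
        (∀ u' v', segment ℝ u' v' ⊆ {z | N z = 1} → S ⊆ segment ℝ u' v' →
          S = segment ℝ u' v')} with h𝒮
  have hex : ∀ S ∈ 𝒮, ∃ u v : F2, u ≠ v ∧ S = segment ℝ u v := fun S hS => hS.1
  choose! U V hUV hSeg using hex
  have hsub : ∀ S ∈ 𝒮, segment ℝ (U S) (V S) ⊆ {z | N z = 1} := by
    intro S hS
    rw [← hSeg S hS]
    exact hS.2.1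
  classical
  set C : Set F2 → Set F2 := fun S =>
    {x | ∃ a b : ℝ, 0 < a ∧ 0 < b ∧ x = a • U S + b • V S} with hC
  apply Set.PairwiseDisjoint.countable_of_isOpen (s := C)
  · -- pairwise disjoint
    intro S hS T hT hST
    simp only [Function.onFun]
    rw [Set.disjoint_left]
    rintro x ⟨a, b, ha, hb, hx1⟩ ⟨a', b', ha', hb', hx2⟩
    obtain ⟨hN1, hz1⟩ := cone_pt N hNsmul (hsub S hS) ha hb
    obtain ⟨hN2, hz2⟩ := cone_pt N hNsmul (hsub T hT) ha' hb'
    rw [← hx1] at hN1 hz1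
    rw [← hx2] at hN2 hz2
    have hab : a + b = a' + b' := by rw [← hN1, ← hN2]
    rw [← hab] at hz2
    have hmaxS : ∀ p q : F2, segment ℝ p q ⊆ {z | N z = 1} →
        segment ℝ (U S) (V S) ⊆ segment ℝ p q → segment ℝ (U S) (V S) = segment ℝ p q := by
      intro p q h1 h2
      rw [← hSeg S hS] at h2 ⊢
      exact hS.2.2 p q h1 h2
    have hmaxT : ∀ p q : F2, segment ℝ p q ⊆ {z | N z = 1} →
        segment ℝ (U T) (V T) ⊆ segment ℝ p q → segment ℝ (U T) (V T) = segment ℝ p q := by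
      intro p q h1 h2
      rw [← hSeg T hT] at h2 ⊢
      exact hT.2.2 p q h1 h2
    have heq := main_cross N hN0 hNsmul hNadd (hUV S hS) (hUV T hT)
      (hsub S hS) (hsub T hT) hmaxS hmaxT hz1 hz2
    exact hST (by rw [hSeg S hS, hSeg T hT, heq])
  · -- open
    intro S hS
    have hindep := indep_of_seg' N hN0 hNsmul (hUV S hS) (hsub S hS)
    have hcard : Fintype.card (Fin 2) = Module.finrank ℝ F2 := by
      simp [finrank_euclideanSpace_fin]
    let B : Module.Basis (Fin 2) ℝ F2 := basisOfLinearIndependentOfCardEqFinrank hindep hcard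
    have hB : ⇑B = ![U S, V S] := coe_basisOfLinearIndependentOfCardEqFinrank hindep hcard
    have hB0 : B 0 = U S := by rw [show B 0 = (⇑B) 0 from rfl, hB]; rfl
    have hB1 : B 1 = V S := by rw [show B 1 = (⇑B) 1 from rfl, hB]; rfl
    have hCS : C S = (B.coord 0) ⁻¹' (Set.Ioi 0) ∩ (B.coord 1) ⁻¹' (Set.Ioi 0) := by
      ext x
      simp only [Set.mem_inter_iff, Set.mem_preimage, Set.mem_Ioi, hC, Set.mem_setOf_eq,
        Module.Basis.coord_apply]
      constructor
      · rintro ⟨a, b, ha, hb, rfl⟩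
        rw [← hB0, ← hB1]
        simp [Module.Basis.repr_self, ha, hb]
      · rintro ⟨h0, h1⟩
        refine ⟨B.repr x 0, B.repr x 1, h0, h1, ?_⟩
        have h2 := B.sum_repr x
        rw [Fin.sum_univ_two, hB0, hB1] at h2
        exact h2.symm
    rw [hCS]
    have hc0 : Continuous (B.coord 0) := LinearMap.continuous_of_finiteDimensional _
    have hc1 : Continuous (B.coord 1) := LinearMap.continuous_of_finiteDimensional _
    exact (isOpen_Ioi.preimage hc0).inter (isOpen_Ioi.preimage hc1)
  · -- nonempty
    intro S hS
    exact ⟨U S + V S, 1, 1, one_pos, one_pos, by simp⟩
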